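/- Let u ∈ ℝ^{d_k} be a unit vector with uᵀ Ŵ_{k,-} = 0 where Ŵ_{k,-} = Ŵ_k ··· Ŵ_1, and for each j > k let w_j ∈ ℝ^{d_j} be a unit vector and δ_j ∈ [0, ε₀/2]. Define W̃_j = Ŵ_j for j ≤ k and, inductively choosing u_{j-1} the appropriate null left-singular vector, W̃_j = Ŵ_j + δ_j w_j û_{j-1}ᵀ for j > k (with û_k = u). Then the full products coincide: W̃_L ··· W̃_1 = Ŵ_L ··· Ŵ_1, and ‖W̃_j − Ŵ_j‖_fro ≤ ε₀/2 for all j. -/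

import Mathlib

open Matrix

/-- Frobenius norm of a real matrix. -/
noncomputable def frob {m n : ℕ} (A : Matrix (Fin m) (Fin n) ℝ) : ℝ :=
  Real.sqrt (∑ i, ∑ j, (A i j)^2)

/-- `prodUpTo d k W = W (k-1) * ⋯ * W 1 * W 0`, the product of the first `k` layer
matrices: in the paper's 1-indexed notation this is the truncated product
`W_{k,-} = W_k ⋯ W_1`, and `prodUpTo d L W = W_L ⋯ W_1` is the full network product. -/
noncomputable def prodUpTo (d : ℕ → ℕ) : (k : ℕ) →
    ((j : ℕ) → Matrix (Fin (d (j+1))) (Fin (d j)) ℝ) → Matrix (Fin (d k)) (Fin (d 0)) ℝ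
  | 0, _ => 1
  | k+1, W => W k * prodUpTo d k W

/-- `G` is the gradient of `f` at `A`:  `f (A+H) = f A + ⟨G, H⟩_fro + o(‖H‖_fro)`,
where `⟨G, H⟩_fro = Tr (Gᵀ H)` is the Frobenius inner product. -/
def HasGradAt {m n : ℕ} (f : Matrix (Fin m) (Fin n) ℝ → ℝ)
    (A G : Matrix (Fin m) (Fin n) ℝ) : Prop :=
  ∀ ε > (0:ℝ), ∃ δ > (0:ℝ), ∀ H : Matrix (Fin m) (Fin n) ℝ,
    frob H ≤ δ → |f (A + H) - f A - (Gᵀ * H).trace| ≤ ε * frob H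

lemma vecMulVec_mul_eq {a b c : ℕ} (w : Fin a → ℝ) (u : Fin b → ℝ)
    (P : Matrix (Fin b) (Fin c) ℝ) :
    vecMulVec w u * P = vecMulVec w (Matrix.vecMul u P) := by
  ext i j
  simp [mul_apply, vecMulVec_apply, Matrix.vecMul, dotProduct, Finset.mul_sum, mul_assoc]

theorem stmt5 (L k : ℕ) (hk : k < L) (d : ℕ → ℕ) (ε₀ : ℝ) (hε : 0 < ε₀)
    (What : (j : ℕ) → Matrix (Fin (d (j+1))) (Fin (d j)) ℝ)
    (u : (j : ℕ) → Fin (d j) → ℝ)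
    (w : (j : ℕ) → Fin (d (j+1)) → ℝ)
    (δ : ℕ → ℝ)
    (hδ : ∀ j, k ≤ j → 0 ≤ δ j ∧ δ j ≤ ε₀ / 2)
    (hw : ∀ j, k ≤ j → Real.sqrt (∑ i, (w j i)^2) = 1)
    (hu : ∀ j, k ≤ j → Real.sqrt (∑ i, (u j i)^2) = 1)
    (Wt : (j : ℕ) → Matrix (Fin (d (j+1))) (Fin (d j)) ℝ)
    (hWt : ∀ j, Wt j = if j < k then What j
      else What j + δ j • Matrix.vecMulVec (w j) (u j))
    (hnull : ∀ j, k ≤ j → j < L → Matrix.vecMul (u j) (prodUpTo d j Wt) = 0) :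
    prodUpTo d L Wt = prodUpTo d L What ∧ ∀ j < L, frob (Wt j - What j) ≤ ε₀ / 2 := by
  constructor
  · -- products coincide up to any m ≤ L
    suffices h : ∀ m, m ≤ L → prodUpTo d m Wt = prodUpTo d m What from h L le_rfl
    intro m hm
    induction m with
    | zero => rfl
    | succ n ih =>
      have hn : n ≤ L := Nat.le_of_succ_le hm
      have ihn := ih hn
      show Wt n * prodUpTo d n Wt = What n * prodUpTo d n What
      rcases lt_or_ge n k with h | h
      · rw [hWt n, if_pos h, ihn]
      · rw [hWt n, if_neg (not_lt.mpr h), Matrix.add_mul, Matrix.smul_mul,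
          vecMulVec_mul_eq, hnull n h (lt_of_lt_of_le (Nat.lt_succ_self n) hm)]
        have : vecMulVec (w n) (0 : Fin (d 0) → ℝ) = 0 := by
          ext i j; simp [vecMulVec_apply]
        rw [this, smul_zero, add_zero, ihn]
  · intro j hj
    rcases lt_or_ge j k with h | h
    · rw [hWt j, if_pos h]
      simp [frob]; positivity
    · have hδj := hδ j h
      rw [hWt j, if_neg (not_lt.mpr h)]
      have : What j + δ j • vecMulVec (w j) (u j) - What j = δ j • vecMulVec (w j) (u j) := by
        abel
      rw [this]
      have key : frob (δ j • vecMulVec (w j) (u j)) = δ j := by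
        unfold frob
        have : ∑ i, ∑ l, ((δ j • vecMulVec (w j) (u j)) i l)^2
            = (δ j)^2 * ((∑ i, (w j i)^2) * (∑ l, (u j l)^2)) := by
          simp only [Matrix.smul_apply, vecMulVec_apply, smul_eq_mul]
          rw [Finset.sum_mul_sum, Finset.mul_sum]
          congr 1; ext i
          rw [Finset.mul_sum]
          congr 1; ext l; ring
        rw [this, Real.sqrt_mul (sq_nonneg _), Real.sqrt_mul (Finset.sum_nonneg
          fun i _ => sq_nonneg _), Real.sqrt_sq hδj.1, hw j h, hu j h, mul_one, mul_one]
      rw [key]; exact hδj.2
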